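/- Let k be a field of characteristic 0 and let Φ, Ψ ∈ k[x₁,x₂] satisfy Φ(0,0) = 0, Ψ(0,0) = 0, and ∂Ψ/∂x₁(0,0) = ∂Ψ/∂x₂(0,0) = 0. Set F := z² + y³ + y·Φ + Ψ ∈ k[x₁,x₂,y,z], let lᵢ := ∂Φ/∂xᵢ(0,0) and qᵢⱼ := ∂²Ψ/∂xᵢ∂xⱼ(0,0). Then the origin is a critical point of F (F and all four partial derivatives of F vanish at 0), and the 4×4 matrix of second partial derivatives of F at the origin is nonsingular if and only if q₂₂·l₁² − 2q₁₂·l₁·l₂ + q₁₁·l₂² ≠ 0. (This is the criterion for a singular point of a double Veronese cone to be a node, an ordinary double point, in terms of the local equation z² + y³ + y·Φ + Ψ.) -/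

import Mathlib

open MvPolynomial

section aux
variable {k : Type*} [CommRing k]

noncomputable def ι : Fin 2 → Fin 4 := Fin.castLE (by norm_num)

lemma pd_rename_hi (p : MvPolynomial (Fin 2) k) (j : Fin 4) (hj : 2 ≤ (j : ℕ)) :
    pderiv j (rename ι p) = 0 := by
  apply pderiv_eq_zero_of_notMem_vars
  intro hv
  obtain ⟨i, _, rfl⟩ := mem_vars_rename ι p hv
  have : (i : ℕ) < 2 := i.2
  simp only [ι, Fin.coe_castLE] at hj
  omega

lemma pd_rename_lo (p : MvPolynomial (Fin 2) k) (i : Fin 2) :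
    pderiv (ι i) (rename ι p) = rename ι (pderiv i p) :=
  pderiv_rename (Fin.castLE_injective _) i p

lemma pd_rename_0 (p : MvPolynomial (Fin 2) k) :
    pderiv (0 : Fin 4) (rename ι p) = rename ι (pderiv (0 : Fin 2) p) :=
  pd_rename_lo p 0

lemma pd_rename_1 (p : MvPolynomial (Fin 2) k) :
    pderiv (1 : Fin 4) (rename ι p) = rename ι (pderiv (1 : Fin 2) p) :=
  pd_rename_lo p 1

lemma pd_rename_2 (p : MvPolynomial (Fin 2) k) :
    pderiv (2 : Fin 4) (rename ι p) = 0 := pd_rename_hi p 2 (by norm_num)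

lemma pd_rename_3 (p : MvPolynomial (Fin 2) k) :
    pderiv (3 : Fin 4) (rename ι p) = 0 := pd_rename_hi p 3 (by decide)

lemma eval0_rename (p : MvPolynomial (Fin 2) k) :
    eval (0 : Fin 4 → k) (rename ι p) = eval (0 : Fin 2 → k) p := by
  rw [eval_rename]; rfl

lemma pderiv_comm' {σ : Type*} (i j : σ) (f : MvPolynomial σ k) :
    pderiv i (pderiv j f) = pderiv j (pderiv i f) := by
  classical
  induction f using MvPolynomial.induction_on' with
  | add p q hp hq => simp [map_add, hp, hq]
  | monomial s a =>
    rcases eq_or_ne i j with rfl | h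
    · rfl
    · simp only [pderiv_monomial, Finsupp.tsub_apply,
        Finsupp.single_apply, if_neg h, if_neg (Ne.symm h), tsub_zero]
      rw [tsub_right_comm]
      ring_nf

lemma det_fin_four' {R : Type*} [CommRing R] (A : Matrix (Fin 4) (Fin 4) R) :
    A.det =
      A 0 0 * (A 1 1 * (A 2 2 * A 3 3 - A 2 3 * A 3 2) - A 1 2 * (A 2 1 * A 3 3 - A 2 3 * A 3 1)
          + A 1 3 * (A 2 1 * A 3 2 - A 2 2 * A 3 1))
      - A 0 1 * (A 1 0 * (A 2 2 * A 3 3 - A 2 3 * A 3 2)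
          - A 1 2 * (A 2 0 * A 3 3 - A 2 3 * A 3 0) + A 1 3 * (A 2 0 * A 3 2 - A 2 2 * A 3 0))
      + A 0 2 * (A 1 0 * (A 2 1 * A 3 3 - A 2 3 * A 3 1)
          - A 1 1 * (A 2 0 * A 3 3 - A 2 3 * A 3 0) + A 1 3 * (A 2 0 * A 3 1 - A 2 1 * A 3 0))
      - A 0 3 * (A 1 0 * (A 2 1 * A 3 2 - A 2 2 * A 3 1)
          - A 1 1 * (A 2 0 * A 3 2 - A 2 2 * A 3 0)
          + A 1 2 * (A 2 0 * A 3 1 - A 2 1 * A 3 0)) := by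
  rw [Matrix.det_succ_row_zero, Fin.sum_univ_four]
  simp only [Matrix.det_fin_three, Matrix.submatrix_apply]
  norm_num [Fin.succAbove, Fin.lt_def,
    show (Fin.succ 2 : Fin 4) = 3 from rfl,
    show ((3 : Fin 4) : ℕ) = 3 from rfl, show ((2 : Fin 4) : ℕ) = 2 from rfl,
    show (Fin.castSucc 2 : Fin 4) = 2 from rfl]
  ring

end aux

example : True := trivial

/-- Nodality criterion for a singular point of a double Veronese cone in terms of the local
equation `F = z² + y³ + y·Φ + Ψ` (variables: x₁ = X 0, x₂ = X 1, y = X 2, z = X 3). -/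
theorem stmt_4 {k : Type*} [Field k] [CharZero k]
    (Φ Ψ : MvPolynomial (Fin 2) k)
    (hΦ : eval (0 : Fin 2 → k) Φ = 0) (hΨ : eval (0 : Fin 2 → k) Ψ = 0)
    (hΨ₁ : eval (0 : Fin 2 → k) (pderiv 0 Ψ) = 0)
    (hΨ₂ : eval (0 : Fin 2 → k) (pderiv 1 Ψ) = 0) :
    let F : MvPolynomial (Fin 4) k :=
      X 3 ^ 2 + X 2 ^ 3 + X 2 * rename (Fin.castLE (by norm_num)) Φ +
        rename (Fin.castLE (by norm_num)) Ψ
    let l : Fin 2 → k := fun i => eval (0 : Fin 2 → k) (pderiv i Φ)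
    let q : Fin 2 → Fin 2 → k := fun i j => eval (0 : Fin 2 → k) (pderiv i (pderiv j Ψ))
    (eval (0 : Fin 4 → k) F = 0 ∧ ∀ i : Fin 4, eval (0 : Fin 4 → k) (pderiv i F) = 0) ∧
    ((Matrix.of fun i j : Fin 4 => eval (0 : Fin 4 → k) (pderiv i (pderiv j F))).det ≠ 0 ↔
      q 1 1 * l 0 ^ 2 - 2 * q 0 1 * l 0 * l 1 + q 0 0 * l 1 ^ 2 ≠ 0) := by
  intro F l q
  have hΦ' : constantCoeff Φ = 0 := by rwa [← eval_zero]
  have hΨ' : constantCoeff Ψ = 0 := by rwa [← eval_zero]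
  have hΨ₁' : constantCoeff ((pderiv (0 : Fin 2)) Ψ) = 0 := by rwa [← eval_zero]
  have hΨ₂' : constantCoeff ((pderiv (1 : Fin 2)) Ψ) = 0 := by rwa [← eval_zero]
  have hF : F = X 3 ^ 2 + X 2 ^ 3 + X 2 * rename ι Φ + rename ι Ψ := rfl
  have d0 : pderiv (0 : Fin 4) F
      = X 2 * rename ι (pderiv 0 Φ) + rename ι (pderiv 0 Ψ) := by
    rw [hF]
    simp [pderiv_mul, pderiv_pow, pderiv_X_of_ne (show (3:Fin 4) ≠ 0 by decide),
      pderiv_X_of_ne (show (2:Fin 4) ≠ 0 by decide), pd_rename_0]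
  have d1 : pderiv (1 : Fin 4) F
      = X 2 * rename ι (pderiv 1 Φ) + rename ι (pderiv 1 Ψ) := by
    rw [hF]
    simp [pderiv_mul, pderiv_pow, pderiv_X_of_ne (show (3:Fin 4) ≠ 1 by decide),
      pderiv_X_of_ne (show (2:Fin 4) ≠ 1 by decide), pd_rename_1]
  have d2 : pderiv (2 : Fin 4) F = C (3 : k) * X 2 ^ 2 + rename ι Φ := by
    rw [hF]
    simp [pderiv_mul, pderiv_pow, pderiv_X_of_ne (show (3:Fin 4) ≠ 2 by decide),
      pderiv_X_self, pd_rename_2, map_ofNat]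
  have d3 : pderiv (3 : Fin 4) F = C (2 : k) * X 3 := by
    rw [hF]
    simp [pderiv_mul, pderiv_pow, pderiv_X_of_ne (show (2:Fin 4) ≠ 3 by decide),
      pderiv_X_self, pd_rename_3, map_ofNat]
  constructor
  · constructor
    · rw [hF]
      simp [eval0_rename, hΦ', hΨ']
    · intro i
      fin_cases i
      · show eval (0 : Fin 4 → k) (pderiv (0 : Fin 4) F) = 0
        rw [d0]; simp [eval0_rename, hΨ₁']
      · show eval (0 : Fin 4 → k) (pderiv (1 : Fin 4) F) = 0
        rw [d1]; simp [eval0_rename, hΨ₂']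
      · show eval (0 : Fin 4 → k) (pderiv (2 : Fin 4) F) = 0
        rw [d2]; simp [eval0_rename, hΦ']
      · show eval (0 : Fin 4 → k) (pderiv (3 : Fin 4) F) = 0
        rw [d3]; simp
  · have ne30 : (3:Fin 4) ≠ 0 := by decide
    have ne20 : (2:Fin 4) ≠ 0 := by decide
    have ne31 : (3:Fin 4) ≠ 1 := by decide
    have ne21 : (2:Fin 4) ≠ 1 := by decide
    have ne32 : (3:Fin 4) ≠ 2 := by decide
    have ne23 : (2:Fin 4) ≠ 3 := by decide
    have E00 : eval (0:Fin 4 → k) (pderiv (0:Fin 4) (pderiv (0:Fin 4) F)) = q 0 0 := by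
      rw [d0]
      simp [pderiv_mul, pd_rename_0, pderiv_X_of_ne ne20, eval0_rename, q, l, eval_zero]
    have E01 : eval (0:Fin 4 → k) (pderiv (0:Fin 4) (pderiv (1:Fin 4) F)) = q 0 1 := by
      rw [d1]
      simp [pderiv_mul, pd_rename_0, pderiv_X_of_ne ne20, eval0_rename, q, l, eval_zero]
    have E10 : eval (0:Fin 4 → k) (pderiv (1:Fin 4) (pderiv (0:Fin 4) F)) = q 0 1 := by
      rw [d0]
      simp only [q]
      rw [pderiv_comm' (0 : Fin 2) 1 Ψ]
      simp [pderiv_mul, pd_rename_1, pderiv_X_of_ne ne21, eval0_rename, q, l, eval_zero]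
    have E11 : eval (0:Fin 4 → k) (pderiv (1:Fin 4) (pderiv (1:Fin 4) F)) = q 1 1 := by
      rw [d1]
      simp [pderiv_mul, pd_rename_1, pderiv_X_of_ne ne21, eval0_rename, q, l, eval_zero]
    have E02 : eval (0:Fin 4 → k) (pderiv (0:Fin 4) (pderiv (2:Fin 4) F)) = l 0 := by
      rw [d2]
      simp [pderiv_C_mul, pderiv_pow, pderiv_X_of_ne ne20, pd_rename_0, eval0_rename, q, l, eval_zero]
    have E20 : eval (0:Fin 4 → k) (pderiv (2:Fin 4) (pderiv (0:Fin 4) F)) = l 0 := by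
      rw [d0]
      simp [pderiv_mul, pd_rename_2, pderiv_X_self, eval0_rename, q, l, eval_zero]
    have E12 : eval (0:Fin 4 → k) (pderiv (1:Fin 4) (pderiv (2:Fin 4) F)) = l 1 := by
      rw [d2]
      simp [pderiv_C_mul, pderiv_pow, pderiv_X_of_ne ne21, pd_rename_1, eval0_rename, q, l, eval_zero]
    have E21 : eval (0:Fin 4 → k) (pderiv (2:Fin 4) (pderiv (1:Fin 4) F)) = l 1 := by
      rw [d1]
      simp [pderiv_mul, pd_rename_2, pderiv_X_self, eval0_rename, q, l, eval_zero]
    have E22 : eval (0:Fin 4 → k) (pderiv (2:Fin 4) (pderiv (2:Fin 4) F)) = 0 := by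
      rw [d2]
      simp [pderiv_C_mul, pderiv_pow, pderiv_X_self, pd_rename_2]
    have E03 : eval (0:Fin 4 → k) (pderiv (0:Fin 4) (pderiv (3:Fin 4) F)) = 0 := by
      rw [d3]
      simp [pderiv_C_mul, pderiv_X_of_ne ne30]
    have E30 : eval (0:Fin 4 → k) (pderiv (3:Fin 4) (pderiv (0:Fin 4) F)) = 0 := by
      rw [d0]
      simp [pderiv_mul, pd_rename_3, pderiv_X_of_ne ne23]
    have E13 : eval (0:Fin 4 → k) (pderiv (1:Fin 4) (pderiv (3:Fin 4) F)) = 0 := by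
      rw [d3]
      simp [pderiv_C_mul, pderiv_X_of_ne ne31]
    have E31 : eval (0:Fin 4 → k) (pderiv (3:Fin 4) (pderiv (1:Fin 4) F)) = 0 := by
      rw [d1]
      simp [pderiv_mul, pd_rename_3, pderiv_X_of_ne ne23]
    have E23 : eval (0:Fin 4 → k) (pderiv (2:Fin 4) (pderiv (3:Fin 4) F)) = 0 := by
      rw [d3]
      simp [pderiv_C_mul, pderiv_X_of_ne ne32]
    have E32 : eval (0:Fin 4 → k) (pderiv (3:Fin 4) (pderiv (2:Fin 4) F)) = 0 := by
      rw [d2]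
      simp [pderiv_C_mul, pderiv_pow, pderiv_X_of_ne ne23, pd_rename_3]
    have E33 : eval (0:Fin 4 → k) (pderiv (3:Fin 4) (pderiv (3:Fin 4) F)) = 2 := by
      rw [d3]
      simp [pderiv_C_mul, pderiv_X_self]
    rw [det_fin_four']
    simp only [Matrix.of_apply, E00, E01, E10, E11, E02, E20, E12, E21, E22, E03, E30,
      E13, E31, E23, E32, E33]
    rw [not_iff_not]
    constructor
    · intro h
      linear_combination (-(1:k)/2) * h
    · intro h
      linear_combination (-2 : k) * h
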